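/- Let n ≥ 1, let r be a positive integer, and for 1 ≤ i ≤ n+1 let a_i, r_i, s_i be positive integers with a_i · r = r_i · s_i. Let k_1, ..., k_{n+1} be integers with Σ_{i=1}^{n+1} k_i = 0, and let p be an integer with 0 ≤ p ≤ n. Then Σ_{i=1}^{n} (a_i / r_i) · ⌊k_i / s_i⌋ + (a_{n+1} / r_{n+1}) · ⌊(k_{n+1} − p) / s_{n+1}⌋ ≥ − Σ_{i=1}^{n+1} a_i / r_i + 1/r, where ⌊·⌋ denotes the floor function and all fractions are rational numbers. -/

import Mathlib

/-- Key single-index estimate: `(a/ri) * ⌊x/s⌋ ≥ x/r - a/ri + 1/r` when `a*r = ri*s`. -/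
lemma stmt_4_aux (a ri s r x : ℤ) (ha : 0 < a) (hri : 0 < ri) (hs : 0 < s) (hr : 0 < r)
    (hrel : a * r = ri * s) :
    (x : ℚ) / r - (a : ℚ) / ri + 1 / r ≤ (a : ℚ) / ri * (⌊(x : ℚ) / (s : ℚ)⌋ : ℚ) := by
  have hfl : ⌊(x : ℚ) / (s : ℚ)⌋ = x / s := by
    have h1 : ((s : ℤ) : ℚ) = ((s.toNat : ℕ) : ℚ) := by
      norm_cast
      exact (Int.toNat_of_nonneg hs.le).symm
    rw [h1, Rat.floor_intCast_div_natCast, Int.toNat_of_nonneg hs.le]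
  rw [hfl]
  have hkey : x - s + 1 ≤ s * (x / s) := by
    have := Int.lt_ediv_add_one_mul_self x hs
    nlinarith
  have hkeyQ : (x : ℚ) - s + 1 ≤ (s : ℚ) * ((x / s : ℤ) : ℚ) := by exact_mod_cast hkey
  have hsQ : (0 : ℚ) < (s : ℚ) := by exact_mod_cast hs
  have hrQ : (0 : ℚ) < (r : ℚ) := by exact_mod_cast hr
  have hriQ : (0 : ℚ) < (ri : ℚ) := by exact_mod_cast hri
  have haQ : (0 : ℚ) < (a : ℚ) := by exact_mod_cast ha
  have hrelQ : (a : ℚ) * r = (ri : ℚ) * s := by exact_mod_cast hrel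
  have h2 : ((x : ℚ) - s + 1) / s ≤ ((x / s : ℤ) : ℚ) := by
    rw [div_le_iff₀ hsQ]; linarith
  have h3 : (a : ℚ) / ri * (((x : ℚ) - s + 1) / s) ≤ (a : ℚ) / ri * ((x / s : ℤ) : ℚ) :=
    mul_le_mul_of_nonneg_left h2 (by positivity)
  have h4 : (a : ℚ) / ri * (((x : ℚ) - s + 1) / s) = (x : ℚ) / r - (a : ℚ) / ri + 1 / r := by
    field_simp
    linear_combination ((x : ℚ) + 1) * hrelQ
  linarith [h3, h4.symm.le]

/-- The key estimate in the proof of Theorem 3.5(5). -/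
theorem stmt_4 (n : ℕ) (hn : 1 ≤ n) (r : ℤ) (hr : 0 < r)
    (a ri s : Fin (n + 1) → ℤ)
    (ha : ∀ i, 0 < a i) (hri : ∀ i, 0 < ri i) (hs : ∀ i, 0 < s i)
    (hrel : ∀ i, a i * r = ri i * s i)
    (k : Fin (n + 1) → ℤ) (hk : ∑ i, k i = 0)
    (p : ℤ) (hp0 : 0 ≤ p) (hpn : p ≤ n) :
    (∑ i : Fin n, ((a i.castSucc : ℚ) / (ri i.castSucc : ℚ)) *
        (⌊(k i.castSucc : ℚ) / (s i.castSucc : ℚ)⌋ : ℚ)) +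
      ((a (Fin.last n) : ℚ) / (ri (Fin.last n) : ℚ)) *
        (⌊((k (Fin.last n) : ℚ) - (p : ℚ)) / (s (Fin.last n) : ℚ)⌋ : ℚ) ≥
      -(∑ i, (a i : ℚ) / (ri i : ℚ)) + 1 / (r : ℚ) := by
  set L := Fin.last n
  have hrQ : (0 : ℚ) < (r : ℚ) := by exact_mod_cast hr
  have hsum1 : ∑ i : Fin n, ((k i.castSucc : ℚ) / r - (a i.castSucc : ℚ) / ri i.castSucc + 1 / r)
      ≤ ∑ i : Fin n, ((a i.castSucc : ℚ) / (ri i.castSucc : ℚ)) *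
        (⌊(k i.castSucc : ℚ) / (s i.castSucc : ℚ)⌋ : ℚ) := by
    apply Finset.sum_le_sum
    intro i _
    exact stmt_4_aux _ _ _ _ _ (ha _) (hri _) (hs _) hr (hrel _)
  have hlast : ((k L : ℚ) - p) / r - (a L : ℚ) / ri L + 1 / r
      ≤ ((a L : ℚ) / (ri L : ℚ)) * (⌊((k L : ℚ) - (p : ℚ)) / (s L : ℚ)⌋ : ℚ) := by
    have := stmt_4_aux (a L) (ri L) (s L) r (k L - p) (ha _) (hri _) (hs _) hr (hrel _)
    push_cast at this
    convert this using 3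
  have hksplit : ∑ i : Fin n, (k i.castSucc : ℚ) = -(k L : ℚ) := by
    have h0 : (∑ i : Fin (n+1), (k i : ℚ)) = 0 := by exact_mod_cast hk
    rw [Fin.sum_univ_castSucc] at h0
    linarith
  have hAsplit : (∑ i : Fin (n+1), (a i : ℚ) / (ri i : ℚ)) =
      ∑ i : Fin n, (a i.castSucc : ℚ) / ri i.castSucc + (a L : ℚ) / ri L :=
    Fin.sum_univ_castSucc _
  have hexp : ∑ i : Fin n, ((k i.castSucc : ℚ) / r - (a i.castSucc : ℚ) / ri i.castSucc + 1 / r)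
      = (∑ i : Fin n, (k i.castSucc : ℚ)) / r
        - (∑ i : Fin n, (a i.castSucc : ℚ) / ri i.castSucc) + n / r := by
    rw [Finset.sum_add_distrib, Finset.sum_sub_distrib, Finset.sum_div]
    simp [Finset.sum_const, Fin.sum_univ_eq_sum_range]
    ring
  have hpQ : (p : ℚ) ≤ (n : ℚ) := by exact_mod_cast hpn
  have hnonneg : (0 : ℚ) ≤ ((n : ℚ) - p) / r := div_nonneg (by linarith) hrQ.le
  have e : (-(k L : ℚ)) / r + (n : ℚ) / r + ((k L : ℚ) - p) / r = ((n : ℚ) - p) / r := by ring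
  rw [ge_iff_le, hAsplit]
  rw [hexp, hksplit] at hsum1
  linarith
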